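/- Let 1 < p < ∞ and let (X_n)_{n≥1} be a sequence of real Banach spaces. For each m ∈ ℕ put Y_m := [⊕_{n=1}^m (X_1 ⊕₁ ⋯ ⊕₁ X_n)]_p (a finite ℓ^p-sum of ℓ¹-direct sums). Assume that for all ε > 0 and R > 0 there exists η > 0 such that for every m ∈ ℕ, every y ∈ Y_m with ‖y‖ ≥ ε, and every sequence (y_k) in Y_m converging weakly to 0 with limsup_{k→∞} ‖y_k‖ ≤ R, one has η + liminf_{k→∞} ‖y_k‖ ≤ liminf_{k→∞} ‖y_k − y‖ (i.e., inf_m η_{Y_m}(ε,R) > 0 for all ε, R > 0). Then the p-Cesàro sum [⊕_{n∈ℕ} X_n]_{ces_p} has the uniform Opial property: for all ε > 0 and R > 0 there exists η > 0 such that for every x in the Cesàro sum with ‖x‖_{ces_p} ≥ ε and every sequence (x^{(k)}) in the Cesàro sum converging weakly to 0 with limsup_{k→∞} ‖x^{(k)}‖_{ces_p} ≤ R, one has η + liminf_{k→∞} ‖x^{(k)}‖_{ces_p} ≤ liminf_{k→∞} ‖x^{(k)} − x‖_{ces_p}. -/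

import Mathlib

open Filter
open scoped ENNReal Topology

open scoped NNReal in
private lemma aux_add_rpow {p x y : ℝ} (hx : 0 ≤ x) (hy : 0 ≤ y) (hp1 : 1 ≤ p) :
    x ^ p + y ^ p ≤ (x + y) ^ p := by
  lift x to ℝ≥0 using hx
  lift y to ℝ≥0 using hy
  have := NNReal.add_rpow_le_rpow_add x y hp1
  push_cast [← NNReal.coe_rpow] at *
  exact_mod_cast this

private lemma aux_minkowski {p a b c d : ℝ} (hp1 : 1 ≤ p) (ha : 0 ≤ a) (hb : 0 ≤ b)
    (hc : 0 ≤ c) (hd : 0 ≤ d) :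
    ((a + c) ^ p + (b + d) ^ p) ^ (1/p) ≤ (a ^ p + b ^ p) ^ (1/p) + (c ^ p + d ^ p) ^ (1/p) := by
  have := Real.Lp_add_le_of_nonneg (s := Finset.univ) (f := ![a, b]) (g := ![c, d]) hp1
    (by intro i _; fin_cases i <;> simpa) (by intro i _; fin_cases i <;> simpa)
  simpa [Fin.sum_univ_two] using this

private lemma exists_subseq_tendsto_liminf {f : ℕ → ℝ} (h0 : ∀ k, 0 ≤ f k) {M : ℝ}
    (hM : ∀ k, f k ≤ M) :
    ∃ φ : ℕ → ℕ, StrictMono φ ∧ Tendsto (f ∘ φ) atTop (𝓝 (liminf f atTop)) := by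
  set L := liminf f atTop with hL
  have hble : IsBoundedUnder (· ≤ ·) atTop f := isBoundedUnder_of ⟨M, hM⟩
  have hbge : IsBoundedUnder (· ≥ ·) atTop f := isBoundedUnder_of ⟨0, h0⟩
  have hP : ∀ j : ℕ, ∃ᶠ k in atTop,
      (f k < L + 1/((j:ℝ)+1) ∧ L - 1/((j:ℝ)+1) < f k) := by
    intro j
    have hpos : (0:ℝ) < 1/((j:ℝ)+1) := by positivity
    have hfr : ∃ᶠ k in atTop, f k < L + 1/((j:ℝ)+1) :=
      frequently_lt_of_liminf_lt hble.isCoboundedUnder_ge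
        (by exact lt_add_of_pos_right L hpos)
    have hev : ∀ᶠ k in atTop, L - 1/((j:ℝ)+1) < f k :=
      eventually_lt_of_lt_liminf (by exact sub_lt_self L hpos) hbge
    exact hfr.and_eventually hev
  obtain ⟨φ, hφ, hPφ⟩ := extraction_forall_of_frequently hP
  refine ⟨φ, hφ, ?_⟩
  have h1 : Tendsto (fun j : ℕ => L - 1/((j:ℝ)+1)) atTop (𝓝 L) := by
    simpa using (tendsto_const_nhds : Tendsto (fun _ : ℕ => L) atTop (𝓝 L)).sub tendsto_one_div_add_atTop_nhds_zero_nat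
  have h2 : Tendsto (fun j : ℕ => L + 1/((j:ℝ)+1)) atTop (𝓝 L) := by
    simpa using (tendsto_const_nhds : Tendsto (fun _ : ℕ => L) atTop (𝓝 L)).add tendsto_one_div_add_atTop_nhds_zero_nat
  exact tendsto_of_tendsto_of_tendsto_of_le_of_le h1 h2
    (fun j => (hPφ j).2.le) (fun j => (hPφ j).1.le)

private lemma weak_null_bounded {E : Type*} [NormedAddCommGroup E] [NormedSpace ℝ E]
    (y : ℕ → E) (h : ∀ φ : E →L[ℝ] ℝ, Tendsto (fun k => φ (y k)) atTop (𝓝 0)) :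
    ∃ M : ℝ, 0 ≤ M ∧ ∀ k, ‖y k‖ ≤ M := by
  set g : ℕ → StrongDual ℝ E →L[ℝ] ℝ :=
    fun k => (NormedSpace.inclusionInDoubleDualLi ℝ (E := E)) (y k) with hg
  have hpt : ∀ φ : StrongDual ℝ E, ∃ C, ∀ k, ‖g k φ‖ ≤ C := by
    intro φ
    obtain ⟨C, hC⟩ := ((h φ).norm).bddAbove_range
    exact ⟨C, fun k => hC ⟨k, rfl⟩⟩
  obtain ⟨C', hC'⟩ := banach_steinhaus hpt
  refine ⟨max C' 0, le_max_right _ _, fun k => ?_⟩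
  have hnorm : ‖g k‖ = ‖y k‖ := (NormedSpace.inclusionInDoubleDualLi ℝ (E := E)).norm_map (y k)
  exact hnorm ▸ le_max_of_le_left (hC' k)

section lpProjSec

variable (q : ℝ≥0∞) [Fact (1 ≤ q)] {G : ℕ → Type*} [∀ n, NormedAddCommGroup (G n)]
    [∀ n, NormedSpace ℝ (G n)]

set_option linter.unusedSectionVars false in
private lemma lpProj_aux (hq : 0 < q.toReal) (m : ℕ) (f : lp G q) :
    ‖((WithLp.equiv q (∀ n : Fin m, G n)).symm fun n : Fin m => f n :
        PiLp q (fun n : Fin m => G n))‖ ^ q.toReal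
      = ∑ n ∈ Finset.range m, ‖f n‖ ^ q.toReal := by
  rw [PiLp.norm_eq_sum hq, one_div, Real.rpow_inv_rpow
    (Finset.sum_nonneg fun i _ => Real.rpow_nonneg (norm_nonneg _) _) (ne_of_gt hq)]
  rw [← Fin.sum_univ_eq_sum_range (fun n => ‖f n‖ ^ q.toReal) m]
  refine Finset.sum_congr rfl fun i _ => ?_
  rw [WithLp.equiv_symm_apply]

private noncomputable def lpProj (hq : 0 < q.toReal) (m : ℕ) :
    lp G q →L[ℝ] PiLp q (fun n : Fin m => G n) :=
  LinearMap.mkContinuous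
    { toFun := fun f => (WithLp.equiv q _).symm (fun n : Fin m => f n)
      map_add' := fun f g => rfl
      map_smul' := fun c f => rfl }
    1 (fun f => by
      rw [one_mul]
      have h2 : ‖f‖ ^ q.toReal = ∑' n, ‖f n‖ ^ q.toReal := lp.norm_rpow_eq_tsum hq f
      have hsum : Summable fun n => ‖f n‖ ^ q.toReal := (lp.memℓp f).summable hq
      have h3 : ∑ n ∈ Finset.range m, ‖f n‖ ^ q.toReal ≤ ∑' n, ‖f n‖ ^ q.toReal :=
        Summable.sum_le_tsum _ (fun i _ => Real.rpow_nonneg (norm_nonneg _) _) hsum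
      have h4 := lpProj_aux q hq m f
      have h5 : ‖((WithLp.equiv q (∀ n : Fin m, G n)).symm fun n : Fin m => f n :
          PiLp q (fun n : Fin m => G n))‖ ^ q.toReal ≤ ‖f‖ ^ q.toReal := by
        rw [h4, h2]; exact h3
      have := Real.rpow_le_rpow (Real.rpow_nonneg (norm_nonneg _) _) h5
        (le_of_lt (by positivity : (0:ℝ) < 1 / q.toReal))
      rwa [one_div, Real.rpow_rpow_inv (norm_nonneg _) (ne_of_gt hq),
        Real.rpow_rpow_inv (norm_nonneg _) (ne_of_gt hq)] at this)

private lemma lpProj_apply (hq : 0 < q.toReal) (m : ℕ) (f : lp G q) (n : Fin m) :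
    lpProj q hq m f n = f n := rfl

private lemma lpProj_norm_rpow (hq : 0 < q.toReal) (m : ℕ) (f : lp G q) :
    ‖lpProj q hq m f‖ ^ q.toReal = ∑ n ∈ Finset.range m, ‖f n‖ ^ q.toReal :=
  lpProj_aux q hq m f

end lpProjSec

/-- The Cesàro norm `‖x‖_{ces_p} = (∑_{n≥1} ((1/n) ∑_{i=1}^n ‖x_i‖)^p)^{1/p}` of a
vector-valued sequence `x` (indexed by `ℕ` starting from `0`). -/
noncomputable def cesNorm (p : ℝ) {X : ℕ → Type*} [∀ n, NormedAddCommGroup (X n)]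
    (x : ∀ n, X n) : ℝ :=
  (∑' n : ℕ, ((∑ i ∈ Finset.range (n + 1), ‖x i‖) / ((n : ℝ) + 1)) ^ p) ^ (1 / p)

/-- Membership in the `p`-Cesàro sum `[⊕ₙ Xₙ]_{ces_p}`. -/
def MemCes (p : ℝ) {X : ℕ → Type*} [∀ n, NormedAddCommGroup (X n)] (x : ∀ n, X n) : Prop :=
  Summable fun n : ℕ => ((∑ i ∈ Finset.range (n + 1), ‖x i‖) / ((n : ℝ) + 1)) ^ p

/-- `X₁ ⊕₁ ⋯ ⊕₁ Xₙ`, the finite direct sum with the `ℓ¹`-norm. -/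
abbrev cesTarget (X : ℕ → Type*) (n : ℕ) : Type _ := PiLp 1 (fun i : Fin (n + 1) => X i)

/-- Saejung's embedding `S`, `(Sx)(n) = (1/n)(x₁, …, xₙ)`, from the Cesàro sum into the
`ℓ^p`-sum of the spaces `X₁ ⊕₁ ⋯ ⊕₁ Xₙ`. -/
noncomputable def cesEmbed {X : ℕ → Type*} [∀ n, NormedAddCommGroup (X n)]
    [∀ n, NormedSpace ℝ (X n)] (x : ∀ n, X n) : ∀ n, cesTarget X n :=
  fun n => ((n : ℝ) + 1)⁻¹ • (WithLp.equiv 1 (∀ i : Fin (n + 1), X i)).symm (fun i => x i)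

/-- `Y_m = [⊕_{n=1}^m (X₁ ⊕₁ ⋯ ⊕₁ Xₙ)]_p`, a finite `ℓ^p`-sum of `ℓ¹`-direct sums. -/
abbrev cesFinTarget (q : ℝ≥0∞) (X : ℕ → Type*) (m : ℕ) : Type _ :=
  PiLp q (fun n : Fin m => cesTarget X n)

section embedSec

variable {p : ℝ} {X : ℕ → Type*} [∀ n, NormedAddCommGroup (X n)] [∀ n, NormedSpace ℝ (X n)]

private lemma norm_cesEmbed (x : ∀ n, X n) (n : ℕ) :
    ‖cesEmbed x n‖ = (∑ i ∈ Finset.range (n + 1), ‖x i‖) / ((n : ℝ) + 1) := by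
  have hpos : (0:ℝ) < (n:ℝ) + 1 := by positivity
  rw [cesEmbed, norm_smul, norm_inv, Real.norm_eq_abs, abs_of_pos hpos]
  rw [inv_mul_eq_div]
  congr 1
  rw [PiLp.norm_eq_sum (by norm_num : (0:ℝ) < (1 : ℝ≥0∞).toReal)]
  simp only [ENNReal.toReal_one, Real.rpow_one, WithLp.equiv_symm_apply, PiLp.toLp_apply, one_div_one]
  exact Fin.sum_univ_eq_sum_range (fun i => ‖x i‖) (n+1)

private lemma cesEmbed_sub (x z : ∀ n, X n) :
    cesEmbed (x - z) = cesEmbed x - cesEmbed z := by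
  funext n
  show _ = cesEmbed x n - cesEmbed z n
  rw [cesEmbed, cesEmbed, cesEmbed, ← smul_sub]
  rfl

private lemma memℓp_cesEmbed (hp : 0 < p) {x : ∀ n, X n} (hx : MemCes p x) :
    Memℓp (cesEmbed x) (ENNReal.ofReal p) := by
  apply memℓp_gen
  rw [show (ENNReal.ofReal p).toReal = p from ENNReal.toReal_ofReal hp.le]
  have : (fun n => ‖cesEmbed x n‖ ^ p)
      = fun n : ℕ => ((∑ i ∈ Finset.range (n + 1), ‖x i‖) / ((n : ℝ) + 1)) ^ p := by
    funext n; rw [norm_cesEmbed]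
  rw [this]; exact hx

private lemma cesNorm_eq_norm (hp : 0 < p) (f : lp (cesTarget X) (ENNReal.ofReal p))
    (x : ∀ n, X n) (hx : ⇑f = cesEmbed x) : cesNorm p x = ‖f‖ := by
  have htr : (ENNReal.ofReal p).toReal = p := ENNReal.toReal_ofReal hp.le
  rw [lp.norm_eq_tsum_rpow (by rw [htr]; exact hp) f, htr, cesNorm]
  congr 1
  apply tsum_congr
  intro n
  rw [show (f : ∀ n, cesTarget X n) n = cesEmbed x n from congrFun hx n, norm_cesEmbed]

end embedSec

/-- Let `1 < p < ∞`. If the moduli `η_{Y_m}(ε, R)` of the finite sums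
`Y_m = [⊕_{n=1}^m (X₁ ⊕₁ ⋯ ⊕₁ Xₙ)]_p` are uniformly positive, i.e. for all `ε, R > 0` there
is `η > 0` working for every `m`, then the `p`-Cesàro sum `[⊕ₙ Xₙ]_{ces_p}` has the uniform
Opial property (weak convergence in the Cesàro sum being expressed via the isometric
embedding `S` into the `ℓ^p`-sum). -/
theorem stmt3 (p : ℝ) (hp : 1 < p) [Fact (1 ≤ ENNReal.ofReal p)]
    (X : ℕ → Type*) [∀ n, NormedAddCommGroup (X n)] [∀ n, NormedSpace ℝ (X n)]
    [∀ n, CompleteSpace (X n)]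
    (hη : ∀ ε > (0 : ℝ), ∀ R > (0 : ℝ), ∃ η > (0 : ℝ), ∀ m : ℕ,
      ∀ y : cesFinTarget (ENNReal.ofReal p) X m, ε ≤ ‖y‖ →
        ∀ u : ℕ → cesFinTarget (ENNReal.ofReal p) X m,
          (∀ φ : cesFinTarget (ENNReal.ofReal p) X m →L[ℝ] ℝ,
            Tendsto (fun k => φ (u k)) atTop (𝓝 0)) →
          limsup (fun k => ‖u k‖) atTop ≤ R →
          η + liminf (fun k => ‖u k‖) atTop ≤ liminf (fun k => ‖u k - y‖) atTop) :
    ∀ ε > (0 : ℝ), ∀ R > (0 : ℝ), ∃ η > (0 : ℝ),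
      ∀ z : ∀ n, X n, MemCes p z → ε ≤ cesNorm p z →
        ∀ x : ℕ → ∀ n, X n, (∀ k, MemCes p (x k)) →
          ∀ y : ℕ → lp (cesTarget X) (ENNReal.ofReal p),
            (∀ k, (y k : ∀ n, cesTarget X n) = cesEmbed (x k)) →
            (∀ φ : lp (cesTarget X) (ENNReal.ofReal p) →L[ℝ] ℝ,
              Tendsto (fun k => φ (y k)) atTop (𝓝 0)) →
            limsup (fun k => cesNorm p (x k)) atTop ≤ R →
            η + liminf (fun k => cesNorm p (x k)) atTop ≤
              liminf (fun k => cesNorm p (x k - z)) atTop := by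
  intro ε hε R hR
  have hp0 : (0:ℝ) < p := lt_trans one_pos hp
  have hpne : p ≠ 0 := ne_of_gt hp0
  have htr : (ENNReal.ofReal p).toReal = p := ENNReal.toReal_ofReal hp0.le
  have h0q : 0 < (ENNReal.ofReal p).toReal := by rw [htr]; exact hp0
  obtain ⟨η₀, hη₀pos, hη₀⟩ := hη (ε/2) (by positivity) R hR
  obtain ⟨c, hc⟩ : ∃ c : ℝ, c = (R ^ p + η₀ ^ p) ^ (1/p) - R := ⟨_, rfl⟩
  have hcpos : 0 < c := by
    have h1 : R ^ p < R ^ p + η₀ ^ p :=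
      lt_add_of_pos_right _ (Real.rpow_pos_of_pos hη₀pos p)
    have h2 : (R ^ p) ^ (1/p) < (R ^ p + η₀ ^ p) ^ (1/p) :=
      Real.rpow_lt_rpow (Real.rpow_nonneg hR.le p) h1 (one_div_pos.mpr hp0)
    have h3 : (R ^ p) ^ (1/p) = R := by rw [one_div, Real.rpow_rpow_inv hR.le hpne]
    rw [hc]; linarith [h3 ▸ h2]
  refine ⟨c/3, div_pos hcpos (by norm_num), ?_⟩
  intro z hz hεz x hx y hy hweak hlimsup
  -- move to the ℓ^p-sum via the isometric embedding
  set w : lp (cesTarget X) (ENNReal.ofReal p) := ⟨cesEmbed z, memℓp_cesEmbed hp0 hz⟩ with hw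
  have hwcoe : ⇑w = cesEmbed z := rfl
  have hxk : ∀ k, cesNorm p (x k) = ‖y k‖ := fun k => cesNorm_eq_norm hp0 (y k) (x k) (hy k)
  have hxkz : ∀ k, cesNorm p (x k - z) = ‖y k - w‖ := by
    intro k
    refine cesNorm_eq_norm hp0 (y k - w) (x k - z) ?_
    rw [lp.coeFn_sub, hy k, hwcoe, cesEmbed_sub]
  have hwz : cesNorm p z = ‖w‖ := cesNorm_eq_norm hp0 w z rfl
  rw [hwz] at hεz
  simp only [hxk] at hlimsup ⊢
  simp only [hxkz]
  -- boundedness of the weakly null sequence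
  obtain ⟨M, hM0, hM⟩ := weak_null_bounded y hweak
  -- basic norm identities in the ℓ^p-sum
  have hsumf : ∀ f : lp (cesTarget X) (ENNReal.ofReal p),
      Summable (fun n => ‖(f : ∀ n, cesTarget X n) n‖ ^ p) := by
    intro f; have := (lp.memℓp f).summable h0q; rwa [htr] at this
  have hnormpow : ∀ f : lp (cesTarget X) (ENNReal.ofReal p),
      ‖f‖ ^ p = ∑' n, ‖(f : ∀ n, cesTarget X n) n‖ ^ p := by
    intro f; have := lp.norm_rpow_eq_tsum h0q f; rwa [htr] at this
  -- choose δ and the cut-off level m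
  obtain ⟨δ, hδdef⟩ : ∃ δ : ℝ, δ = min (c/3) (ε/2) := ⟨_, rfl⟩
  have hδpos : 0 < δ := by
    rw [hδdef]
    exact lt_min (div_pos hcpos (by norm_num)) (div_pos hε (by norm_num))
  have hδc : δ ≤ c/3 := by rw [hδdef]; exact min_le_left _ _
  have hδε : δ ≤ ε/2 := by rw [hδdef]; exact min_le_right _ _
  have htail : Tendsto (fun m => ∑' n, ‖(w : ∀ n, cesTarget X n) (n + m)‖ ^ p) atTop (𝓝 0) :=
    tendsto_sum_nat_add (fun n => ‖(w : ∀ n, cesTarget X n) n‖ ^ p)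
  obtain ⟨m, hm⟩ :=
    (htail.eventually_lt_const (Real.rpow_pos_of_pos hδpos p)).exists
  -- the truncation w' of w
  have hw'mem : Memℓp (fun n => if n < m then (w : ∀ n, cesTarget X n) n else 0)
      (ENNReal.ofReal p) := by
    apply memℓp_gen
    apply summable_of_ne_finset_zero (s := Finset.range m)
    intro n hn
    rw [if_neg (by simpa using hn), norm_zero, Real.zero_rpow (by rw [htr]; exact hpne)]
  set w' : lp (cesTarget X) (ENNReal.ofReal p) := ⟨_, hw'mem⟩ with hw'
  have hw'coe : ∀ n, (w' : ∀ n, cesTarget X n) n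
      = if n < m then (w : ∀ n, cesTarget X n) n else 0 := fun n => rfl
  -- the projection
  set P := lpProj (q := ENNReal.ofReal p) (G := cesTarget X) h0q m with hPdef
  have hPnorm : ∀ f : lp (cesTarget X) (ENNReal.ofReal p),
      ‖P f‖ ^ p = ∑ n ∈ Finset.range m, ‖(f : ∀ n, cesTarget X n) n‖ ^ p := by
    intro f
    have := lpProj_norm_rpow (ENNReal.ofReal p) h0q m f
    rwa [htr] at this
  have key1 : ∀ f : lp (cesTarget X) (ENNReal.ofReal p),
      ‖f‖ ^ p = ‖P f‖ ^ p + ∑' n, ‖(f : ∀ n, cesTarget X n) (n + m)‖ ^ p := by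
    intro f
    rw [hnormpow f, hPnorm f, ← Summable.sum_add_tsum_nat_add m (hsumf f)]
  have hPw' : P w' = P w := by
    ext n : 1
    show (w' : ∀ n, cesTarget X n) n = (w : ∀ n, cesTarget X n) n
    rw [hw'coe]; exact if_pos n.isLt
  -- sequences of norms
  set A : ℕ → ℝ := fun k => ‖P (y k)‖ with hAdef
  set B : ℕ → ℝ := fun k =>
    (∑' n, ‖(y k : ∀ n, cesTarget X n) (n + m)‖ ^ p) ^ (1/p) with hBdef
  set C : ℕ → ℝ := fun k => ‖P (y k) - P w‖ with hCdef
  set d : ℕ → ℝ := fun k => ‖y k‖ with hddef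
  set a : ℕ → ℝ := fun k => ‖y k - w‖ with hadef
  have hBpow : ∀ k, B k ^ p = ∑' n, ‖(y k : ∀ n, cesTarget X n) (n + m)‖ ^ p := by
    intro k
    rw [hBdef, one_div, Real.rpow_inv_rpow
      (tsum_nonneg fun n => Real.rpow_nonneg (norm_nonneg _) _) hpne]
  have hB0 : ∀ k, 0 ≤ B k := fun k =>
    Real.rpow_nonneg (tsum_nonneg fun n => Real.rpow_nonneg (norm_nonneg _) _) _
  have hR1 : ∀ k, d k ^ p = A k ^ p + B k ^ p := by
    intro k; rw [hBpow]; exact key1 (y k)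
  -- ‖y k - w'‖ decomposition
  have htailsub : ∀ k, ∑' n, ‖((y k - w' : lp (cesTarget X) (ENNReal.ofReal p)) :
      ∀ n, cesTarget X n) (n + m)‖ ^ p = ∑' n, ‖(y k : ∀ n, cesTarget X n) (n + m)‖ ^ p := by
    intro k
    apply tsum_congr
    intro n
    rw [lp.coeFn_sub, Pi.sub_apply, hw'coe, if_neg (by omega), sub_zero]
  have hR2 : ∀ k, ‖(y k - w' : lp (cesTarget X) (ENNReal.ofReal p))‖ ^ p
      = C k ^ p + B k ^ p := by
    intro k
    rw [key1 (y k - w'), map_sub, hPw', htailsub k, hBpow]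
  -- ‖w - w'‖ ≤ δ
  have hww' : ‖(w - w' : lp (cesTarget X) (ENNReal.ofReal p))‖ ≤ δ := by
    have h1 : ‖(w - w' : lp (cesTarget X) (ENNReal.ofReal p))‖ ^ p
        = ∑' n, ‖(w : ∀ n, cesTarget X n) (n + m)‖ ^ p := by
      rw [key1 (w - w'), map_sub, hPw', sub_self, norm_zero, Real.zero_rpow hpne, zero_add]
      apply tsum_congr
      intro n
      rw [lp.coeFn_sub, Pi.sub_apply, hw'coe, if_neg (by omega), sub_zero]
    have h2 : ‖(w - w' : lp (cesTarget X) (ENNReal.ofReal p))‖ ^ p ≤ δ ^ p := by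
      rw [h1]; exact hm.le
    exact (Real.rpow_le_rpow_iff (norm_nonneg _) hδpos.le hp0).mp h2
  -- ‖P w‖ = ‖w'‖ and is large
  have hPwnorm : ‖P w‖ = ‖w'‖ := by
    have hzero : ∀ n : ℕ, ‖(w' : ∀ n, cesTarget X n) (n + m)‖ ^ p = 0 := by
      intro n
      rw [hw'coe, if_neg (by omega), norm_zero, Real.zero_rpow hpne]
    have h1 : ‖w'‖ ^ p = ‖P w‖ ^ p := by
      rw [key1 w', hPw', tsum_congr hzero, tsum_zero, add_zero]
    have h2 : (‖w'‖ ^ p) ^ (1/p) = (‖P w‖ ^ p) ^ (1/p) := by rw [h1]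
    rw [one_div, Real.rpow_rpow_inv (norm_nonneg _) hpne,
      Real.rpow_rpow_inv (norm_nonneg _) hpne] at h2
    exact h2.symm
  have hPwε : ε/2 ≤ ‖P w‖ := by
    have h1 : ‖w‖ - ‖w'‖ ≤ ‖(w - w' : lp (cesTarget X) (ENNReal.ofReal p))‖ :=
      norm_sub_norm_le _ _
    rw [hPwnorm]
    linarith
  -- bounds
  have hAle : ∀ k, A k ≤ d k := by
    intro k
    have h1 : A k ^ p ≤ d k ^ p := by
      rw [hR1 k]
      exact le_add_of_nonneg_right (Real.rpow_nonneg (hB0 k) p)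
    exact (Real.rpow_le_rpow_iff (norm_nonneg _) (norm_nonneg _) hp0).mp h1
  have hBled : ∀ k, B k ≤ d k := by
    intro k
    have h1 : B k ^ p ≤ d k ^ p := by
      rw [hR1 k]
      exact le_add_of_nonneg_left (Real.rpow_nonneg (norm_nonneg _) p)
    exact (Real.rpow_le_rpow_iff (hB0 k) (norm_nonneg _) hp0).mp h1
  set M' : ℝ := M + ‖w‖ + ‖P w‖ with hM'def
  have hwn : (0:ℝ) ≤ ‖w‖ := norm_nonneg _
  have hPwn : (0:ℝ) ≤ ‖P w‖ := norm_nonneg _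
  have hdM : ∀ k, d k ≤ M' := fun k => by
    have := hM k; rw [hM'def]; simp only [hddef]; linarith
  have haM : ∀ k, a k ≤ M' := fun k => by
    have h1 : ‖y k - w‖ ≤ ‖y k‖ + ‖w‖ := norm_sub_le _ _
    have := hM k; rw [hM'def]; simp only [hadef]; linarith
  have hAM : ∀ k, A k ≤ M' := fun k => le_trans (hAle k) (hdM k)
  have hBM : ∀ k, B k ≤ M' := fun k => le_trans (hBled k) (hdM k)
  have hCM : ∀ k, C k ≤ M' := fun k => by
    have h1 : ‖P (y k) - P w‖ ≤ ‖P (y k)‖ + ‖P w‖ := norm_sub_le _ _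
    have h2 := le_trans (hAle k) (hM k)
    rw [hM'def]; simp only [hCdef]; simp only [hAdef] at h2; linarith
  -- extraction of a good subsequence
  obtain ⟨φ₀, hφ₀, hφ₀lim⟩ :=
    exists_subseq_tendsto_liminf (f := a) (fun k => norm_nonneg _) haM
  obtain ⟨Ai, -, ψ₁, hψ₁, hA₁⟩ := (isCompact_Icc (a := (0:ℝ)) (b := M')).tendsto_subseq
    (x := fun j => A (φ₀ j)) (fun j => ⟨norm_nonneg _, hAM _⟩)
  obtain ⟨Bi, -, ψ₂, hψ₂, hB₂⟩ := (isCompact_Icc (a := (0:ℝ)) (b := M')).tendsto_subseq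
    (x := fun j => B (φ₀ (ψ₁ j))) (fun j => ⟨hB0 _, hBM _⟩)
  obtain ⟨Ci, -, ψ₃, hψ₃, hC₃⟩ := (isCompact_Icc (a := (0:ℝ)) (b := M')).tendsto_subseq
    (x := fun j => C (φ₀ (ψ₁ (ψ₂ j)))) (fun j => ⟨norm_nonneg _, hCM _⟩)
  obtain ⟨Di, -, ψ₄, hψ₄, hD₄⟩ := (isCompact_Icc (a := (0:ℝ)) (b := M')).tendsto_subseq
    (x := fun j => d (φ₀ (ψ₁ (ψ₂ (ψ₃ j))))) (fun j => ⟨norm_nonneg _, hdM _⟩)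
  set Φ : ℕ → ℕ := fun j => φ₀ (ψ₁ (ψ₂ (ψ₃ (ψ₄ j)))) with hΦdef
  have hΦmono : StrictMono Φ := fun i j hij => hφ₀ (hψ₁ (hψ₂ (hψ₃ (hψ₄ hij))))
  have hAΦ : Tendsto (fun j => A (Φ j)) atTop (𝓝 Ai) :=
    hA₁.comp ((hψ₂.comp (hψ₃.comp hψ₄)).tendsto_atTop)
  have hBΦ : Tendsto (fun j => B (Φ j)) atTop (𝓝 Bi) :=
    hB₂.comp ((hψ₃.comp hψ₄).tendsto_atTop)
  have hCΦ : Tendsto (fun j => C (Φ j)) atTop (𝓝 Ci) :=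
    hC₃.comp (hψ₄.tendsto_atTop)
  have hDΦ : Tendsto (fun j => d (Φ j)) atTop (𝓝 Di) := hD₄
  have haΦ : Tendsto (fun j => a (Φ j)) atTop (𝓝 (liminf a atTop)) :=
    hφ₀lim.comp ((hψ₁.comp (hψ₂.comp (hψ₃.comp hψ₄))).tendsto_atTop)
  -- elementary limit facts
  have hAi0 : 0 ≤ Ai := ge_of_tendsto' hAΦ (fun j => norm_nonneg _)
  have hBi0 : 0 ≤ Bi := ge_of_tendsto' hBΦ (fun j => hB0 _)
  have hDi0 : 0 ≤ Di := ge_of_tendsto' hDΦ (fun j => norm_nonneg _)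
  have hAiD : Ai ≤ Di := le_of_tendsto_of_tendsto' hAΦ hDΦ (fun j => hAle _)
  have hDiR : Di ≤ R := by
    refine le_of_forall_gt_imp_ge_of_dense fun r hr => ?_
    have hbd : IsBoundedUnder (· ≤ ·) atTop d := isBoundedUnder_of ⟨M, fun k => hM k⟩
    have hev : ∀ᶠ k in atTop, d k < r :=
      eventually_lt_of_limsup_lt (lt_of_le_of_lt hlimsup hr) hbd
    have hev2 : ∀ᶠ j in atTop, d (Φ j) < r := hΦmono.tendsto_atTop.eventually hev
    exact le_of_tendsto hDΦ (hev2.mono fun j h => h.le)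
  have hliminfd : liminf d atTop ≤ Di := by
    refine le_of_forall_lt_imp_le_of_dense fun r hr => ?_
    have hbd : IsBoundedUnder (· ≥ ·) atTop d := isBoundedUnder_of ⟨0, fun k => norm_nonneg _⟩
    have hev : ∀ᶠ k in atTop, r < d k := eventually_lt_of_lt_liminf hr hbd
    have hev2 : ∀ᶠ j in atTop, r < d (Φ j) := hΦmono.tendsto_atTop.eventually hev
    exact ge_of_tendsto hDΦ (hev2.mono fun j h => h.le)
  -- apply the uniform finite-dimensional Opial hypothesis
  set u : ℕ → cesFinTarget (ENNReal.ofReal p) X m := fun j => P (y (Φ j)) with hudef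
  have huweak : ∀ ψ : cesFinTarget (ENNReal.ofReal p) X m →L[ℝ] ℝ,
      Tendsto (fun j => ψ (u j)) atTop (𝓝 0) := by
    intro ψ
    have h1 : Tendsto (fun k => (ψ.comp P) (y k)) atTop (𝓝 0) := hweak _
    exact h1.comp hΦmono.tendsto_atTop
  have hunorm : (fun j => ‖u j‖) = fun j => A (Φ j) := rfl
  have hulimsup : limsup (fun j => ‖u j‖) atTop ≤ R := by
    rw [hunorm, hAΦ.limsup_eq]
    exact le_trans hAiD hDiR
  have key := hη₀ m (P w) hPwε u huweak hulimsup
  rw [hunorm, hAΦ.liminf_eq] at key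
  have husub : (fun j => ‖u j - P w‖) = fun j => C (Φ j) := rfl
  rw [husub, hCΦ.liminf_eq] at key
  -- pass to the limit in the decomposition inequality
  have hg : Tendsto (fun j => (C (Φ j) ^ p + B (Φ j) ^ p) ^ (1/p)) atTop
      (𝓝 ((Ci ^ p + Bi ^ p) ^ (1/p))) :=
    ((hCΦ.rpow_const (Or.inr hp0.le)).add (hBΦ.rpow_const (Or.inr hp0.le))).rpow_const
      (Or.inr (one_div_pos.mpr hp0).le)
  have hpointwise : ∀ j, (C (Φ j) ^ p + B (Φ j) ^ p) ^ (1/p) - δ ≤ a (Φ j) := by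
    intro j
    have h1 : (C (Φ j) ^ p + B (Φ j) ^ p) ^ (1/p)
        = ‖(y (Φ j) - w' : lp (cesTarget X) (ENNReal.ofReal p))‖ := by
      rw [← hR2 (Φ j), one_div, Real.rpow_rpow_inv (norm_nonneg _) hpne]
    have h2 : ‖(y (Φ j) - w' : lp (cesTarget X) (ENNReal.ofReal p))‖
        ≤ ‖(y (Φ j) - w : lp (cesTarget X) (ENNReal.ofReal p))‖
          + ‖(w - w' : lp (cesTarget X) (ENNReal.ofReal p))‖ := by
      have : (y (Φ j) - w' : lp (cesTarget X) (ENNReal.ofReal p))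
          = (y (Φ j) - w) + (w - w') := by abel
      rw [this]; exact norm_add_le _ _
    have h3 := hww'
    have h4 : a (Φ j) = ‖(y (Φ j) - w : lp (cesTarget X) (ENNReal.ofReal p))‖ := rfl
    rw [h1, h4]
    linarith
  have hGdL : (Ci ^ p + Bi ^ p) ^ (1/p) - δ ≤ liminf a atTop :=
    le_of_tendsto_of_tendsto' (hg.sub tendsto_const_nhds) haΦ hpointwise
  -- identify Di^p = Ai^p + Bi^p
  have hDipow : Di ^ p = Ai ^ p + Bi ^ p := by
    have h1 : Tendsto (fun j => d (Φ j) ^ p) atTop (𝓝 (Di ^ p)) :=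
      hDΦ.rpow_const (Or.inr hp0.le)
    have h2 : Tendsto (fun j => d (Φ j) ^ p) atTop (𝓝 (Ai ^ p + Bi ^ p)) := by
      have h3 : (fun j => d (Φ j) ^ p) = fun j => A (Φ j) ^ p + B (Φ j) ^ p := by
        funext j; exact hR1 (Φ j)
      rw [h3]
      exact (hAΦ.rpow_const (Or.inr hp0.le)).add (hBΦ.rpow_const (Or.inr hp0.le))
    exact tendsto_nhds_unique h1 h2
  -- chain of inequalities
  have key' : Ai + η₀ ≤ Ci := by linarith
  have hchain1 : (Di ^ p + η₀ ^ p) ^ (1/p) ≤ (Ci ^ p + Bi ^ p) ^ (1/p) := by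
    apply Real.rpow_le_rpow
      (add_nonneg (Real.rpow_nonneg hDi0 p) (Real.rpow_nonneg hη₀pos.le p)) ?_
      (one_div_pos.mpr hp0).le
    rw [hDipow]
    have h1 : Ai ^ p + η₀ ^ p ≤ (Ai + η₀) ^ p := aux_add_rpow hAi0 hη₀pos.le hp.le
    have h2 : (Ai + η₀) ^ p ≤ Ci ^ p :=
      Real.rpow_le_rpow (by positivity) key' (le_of_lt hp0)
    linarith
  have hchain2 : c + Di ≤ (Di ^ p + η₀ ^ p) ^ (1/p) := by
    have h1 := aux_minkowski (p := p) (a := Di) (b := η₀) (c := R - Di) (d := 0)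
      hp.le hDi0 hη₀pos.le (by linarith) le_rfl
    rw [add_zero, add_sub_cancel] at h1
    have h2 : ((R - Di) ^ p + 0 ^ p) ^ (1/p) = R - Di := by
      rw [Real.zero_rpow hpne, add_zero, one_div, Real.rpow_rpow_inv (by linarith) hpne]
    rw [h2] at h1
    rw [hc]
    linarith
  -- finish
  have hfinal : c/3 + liminf d atTop ≤ liminf a atTop := by linarith
  exact hfinal
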